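/- arXiv:1410.0214 — 2 statements merged into one kernel-verified Lean document; each statement's English description precedes it below -/
import Mathlib

section
/- Let X_0 be a real-valued random variable such that 0 < G(r) < ∞ for every r ≥ 0 and for every ε > 0, G(r+ε)/G(r) → 0 as r → ∞. Then for every r ≥ 0, E[(U_r(X_0))² · 1(|U_r(X_0)| ≥ ε)] ≤ 8·G(r + ε/2) for every ε > 0. -/
open MeasureTheory ProbabilityTheory Filter Asymptotics
open scoped ENNReal Topology NNReal

noncomputable section

/-- The shrinking operator `U_r : ℝ → ℝ` (for `r ≥ 0`):
`U_r(x) = x - r` if `x > r`, `0` if `|x| ≤ r`, and `x + r` if `x < -r`. -/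
def shrink (r x : ℝ) : ℝ := if r < x then x - r else if x < -r then x + r else 0

variable {Ω : Type*}

/-- `G(r) := ∫₀^∞ t · P(|X| > t + r) dt`. -/
def Gfun [MeasurableSpace Ω] (P : Measure Ω) (X : Ω → ℝ) (r : ℝ) : ℝ≥0∞ :=
  ∫⁻ t in Set.Ioi (0 : ℝ), ENNReal.ofReal t * P {ω | t + r < |X ω|}

/-- Strict stationarity of a two-sided sequence of random variables: for all `j, l ∈ ℤ`
and `m ≥ 0`, the random vectors `(X_j, …, X_{j+m})` and `(X_l, …, X_{l+m})` have the
same distribution. -/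
def StrictlyStationary [MeasurableSpace Ω] (P : Measure Ω) (X : ℤ → Ω → ℝ) : Prop :=
  ∀ (j l : ℤ) (m : ℕ),
    Measure.map (fun ω => fun i : Fin (m + 1) => X (j + i) ω) P =
    Measure.map (fun ω => fun i : Fin (m + 1) => X (l + i) ω) P

/-- The correlation coefficient of two real random variables. -/
def corr [MeasurableSpace Ω] (P : Measure Ω) (f g : Ω → ℝ) : ℝ :=
  (∫ ω, (f ω - ∫ x, f x ∂P) * (g ω - ∫ x, g x ∂P) ∂P) /
    (Real.sqrt (∫ ω, (f ω - ∫ x, f x ∂P) ^ 2 ∂P) *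
      Real.sqrt (∫ ω, (g ω - ∫ x, g x ∂P) ^ 2 ∂P))

/-- The maximal correlation coefficient `ρ(𝒜, ℬ)`: the supremum of `|Corr(f,g)|` over
square-integrable `f` measurable w.r.t. `𝒜` and `g` measurable w.r.t. `ℬ`. -/
def maxCorr [mΩ : MeasurableSpace Ω] (P : Measure Ω) (A B : MeasurableSpace Ω) : ℝ :=
  sSup { c | ∃ f g : Ω → ℝ, Measurable[A] f ∧ Measurable[B] g ∧
    @MemLp Ω ℝ mΩ _ _ f 2 P ∧ @MemLp Ω ℝ mΩ _ _ g 2 P ∧ c = |@corr Ω mΩ P f g| }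

/-- The strong mixing coefficient `α(𝒜, ℬ)`. -/
def alphaMix [MeasurableSpace Ω] (P : Measure Ω) (A B : MeasurableSpace Ω) : ℝ :=
  sSup { c | ∃ s t : Set Ω, MeasurableSet[A] s ∧ MeasurableSet[B] t ∧
    c = |(P (s ∩ t)).toReal - (P s).toReal * (P t).toReal| }

/-- The σ-field generated by the random variables `X k`, `k ∈ S`. -/
def genFrom [MeasurableSpace Ω] (X : ℤ → Ω → ℝ) (S : Set ℤ) : MeasurableSpace Ω :=
  ⨆ k ∈ S, MeasurableSpace.comap (X k) inferInstance

/-- `ρ(n) = ρ(σ(X_k, k ≤ 0), σ(X_k, k ≥ n))`. -/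
def rhoCoef [MeasurableSpace Ω] (P : Measure Ω) (X : ℤ → Ω → ℝ) (n : ℕ) : ℝ :=
  maxCorr P (genFrom X {k | k ≤ 0}) (genFrom X {k | (n : ℤ) ≤ k})

/-- `α(n) = α(σ(X_k, k ≤ 0), σ(X_k, k ≥ n))`. -/
def alphaCoef [MeasurableSpace Ω] (P : Measure Ω) (X : ℤ → Ω → ℝ) (n : ℕ) : ℝ :=
  alphaMix P (genFrom X {k | k ≤ 0}) (genFrom X {k | (n : ℤ) ≤ k})

/-- `ρ*(n)`: the supremum of `ρ(σ(X_k, k ∈ S), σ(X_k, k ∈ T))` over all pairs of nonempty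
disjoint `S, T ⊆ ℤ` with `dist(S,T) ≥ n`. -/
def rhoStarCoef [MeasurableSpace Ω] (P : Measure Ω) (X : ℤ → Ω → ℝ) (n : ℕ) : ℝ :=
  sSup { c | ∃ S T : Set ℤ, S.Nonempty ∧ T.Nonempty ∧ Disjoint S T ∧
    (∀ s ∈ S, ∀ t ∈ T, (n : ℤ) ≤ |s - t|) ∧
    c = maxCorr P (genFrom X S) (genFrom X T) }

/-- `Y_{k,r} := U_r(X_k) - E[U_r(X_0)]`. -/
def Ymix [MeasurableSpace Ω] (P : Measure Ω) (X : ℤ → Ω → ℝ) (k : ℤ) (r : ℝ) (ω : Ω) : ℝ :=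
  shrink r (X k ω) - ∫ ω', shrink r (X 0 ω') ∂P

lemma measurable_shrink (r : ℝ) : Measurable (shrink r) := by
  unfold shrink
  exact Measurable.ite measurableSet_Ioi (measurable_id.sub measurable_const)
    (Measurable.ite measurableSet_Iio (measurable_id.add measurable_const) measurable_const)

lemma abs_shrink (r : ℝ) (hr : 0 ≤ r) (x : ℝ) : |shrink r x| = max (|x| - r) 0 := by
  unfold shrink
  rcases lt_trichotomy r x with h | h | h
  · rw [if_pos h, abs_of_nonneg (by linarith), abs_of_nonneg (by linarith : (0:ℝ) ≤ x),
      max_eq_left (by linarith)]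
  · subst h
    rw [if_neg (lt_irrefl _), if_neg (by linarith), abs_zero, abs_of_nonneg hr,
      max_eq_right (by linarith)]
  · rw [if_neg (not_lt.2 h.le)]
    by_cases h2 : x < -r
    · rw [if_pos h2, abs_of_nonpos (by linarith), abs_of_nonpos (by linarith),
        max_eq_left (by linarith)]
      ring
    · rw [if_neg h2, abs_zero]
      push_neg at h2
      rcases abs_cases x with ⟨ha, _⟩ | ⟨ha, _⟩ <;>
        rw [max_eq_right (by linarith)]

lemma shrink_sq_le (r ε x : ℝ) (hr : 0 ≤ r) (hε : 0 < ε)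
    (h : ε ≤ |shrink r x|) : shrink r x ^ 2 ≤ 4 * shrink (r + ε / 2) x ^ 2 := by
  have h1 := abs_shrink r hr x
  have h2 := abs_shrink (r + ε / 2) (by linarith) x
  rw [h1] at h
  have hε' : ε ≤ |x| - r := by
    rcases max_cases (|x| - r) 0 with ⟨he, _⟩ | ⟨he, _⟩ <;> rw [he] at h <;> linarith
  have e1 : shrink r x ^ 2 = (|x| - r) ^ 2 := by
    rw [← sq_abs, h1, max_eq_left (by linarith)]
  have e2 : shrink (r + ε / 2) x ^ 2 = (|x| - r - ε / 2) ^ 2 := by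
    rw [← sq_abs, h2, max_eq_left (by linarith)]
    ring_nf
  rw [e1, e2]
  nlinarith [sq_nonneg (|x| - r - ε)]

lemma lintegral_shrink_sq {Ω : Type*} [MeasurableSpace Ω] (P : Measure Ω)
    (X₀ : Ω → ℝ) (hmeas : Measurable X₀) (s : ℝ) (hs : 0 ≤ s) :
    ∫⁻ ω, ENNReal.ofReal (shrink s (X₀ ω) ^ 2) ∂P = 2 * Gfun P X₀ s := by
  have hf : Measurable fun ω => |shrink s (X₀ ω)| :=
    ((measurable_shrink s).comp hmeas).abs
  have key := lintegral_comp_eq_lintegral_meas_lt_mul P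
    (f := fun ω => |shrink s (X₀ ω)|) (g := fun t => 2 * t)
    (Eventually.of_forall fun ω => abs_nonneg _) hf.aemeasurable
    (fun t _ => intervalIntegral.intervalIntegrable_id.const_mul 2)
    ((ae_restrict_iff' measurableSet_Ioi).2 (Eventually.of_forall fun t ht => by
      have : (0:ℝ) < t := ht; positivity))
  have e1 : ∀ ω, (∫ t in (0:ℝ)..|shrink s (X₀ ω)|, 2 * t) = shrink s (X₀ ω) ^ 2 := by
    intro ω
    rw [intervalIntegral.integral_const_mul, integral_id]
    simp [sq_abs]
    ring
  simp_rw [e1] at key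
  have hmono : Antitone fun t : ℝ => P {ω | t + s < |X₀ ω|} := by
    intro a b hab
    exact measure_mono fun ω h => lt_of_le_of_lt (by linarith : a + s ≤ b + s) h
  rw [key, Gfun, ← lintegral_const_mul (2:ℝ≥0∞)
    (f := fun t : ℝ => ENNReal.ofReal t * P {ω | t + s < |X₀ ω|})
    (ENNReal.measurable_ofReal.mul hmono.measurable)]
  apply setLIntegral_congr_fun_ae measurableSet_Ioi
  apply Eventually.of_forall
  intro t ht
  have hset : {a | t < |shrink s (X₀ a)|} = {ω | t + s < |X₀ ω|} := by
    ext ω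
    rw [Set.mem_setOf_eq, Set.mem_setOf_eq, abs_shrink s hs, lt_max_iff]
    constructor
    · rintro (h | h)
      · linarith
      · exact absurd h (not_lt.2 (le_of_lt ht))
    · intro h; left; linarith
  rw [hset, ENNReal.ofReal_mul (by norm_num), ENNReal.ofReal_ofNat]
  ring

/-- The key estimate in the proof of eq. (4.7):
`E[(U_r(X_0))² · 1(|U_r(X_0)| ≥ ε)] ≤ 8·G(r + ε/2)`. -/
theorem truncated_second_moment_le
    [MeasurableSpace Ω] (P : Measure Ω) [IsProbabilityMeasure P]
    (X₀ : Ω → ℝ) (hmeas : Measurable X₀)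
    (hG : ∀ r : ℝ, 0 ≤ r → 0 < Gfun P X₀ r ∧ Gfun P X₀ r < ∞)
    (hGratio : ∀ ε : ℝ, 0 < ε →
      Tendsto (fun r : ℝ => (Gfun P X₀ (r + ε)).toReal / (Gfun P X₀ r).toReal)
        atTop (𝓝 0)) :
    ∀ r : ℝ, 0 ≤ r → ∀ ε : ℝ, 0 < ε →
      (∫ ω in {ω | ε ≤ |shrink r (X₀ ω)|}, shrink r (X₀ ω) ^ 2 ∂P)
        ≤ 8 * (Gfun P X₀ (r + ε / 2)).toReal := by
  intro r hr ε hε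
  have hs : 0 ≤ r + ε / 2 := by linarith
  have hGtop : Gfun P X₀ (r + ε / 2) ≠ ∞ := (hG _ hs).2.ne
  have hmsq : Measurable fun ω => shrink r (X₀ ω) ^ 2 :=
    (((measurable_shrink r).comp hmeas).pow measurable_const)
  have hA : MeasurableSet {ω | ε ≤ |shrink r (X₀ ω)|} :=
    measurableSet_le measurable_const ((measurable_shrink r).comp hmeas).abs
  have heq : (∫ ω in {ω | ε ≤ |shrink r (X₀ ω)|}, shrink r (X₀ ω) ^ 2 ∂P)
      = (∫⁻ ω in {ω | ε ≤ |shrink r (X₀ ω)|},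
          ENNReal.ofReal (shrink r (X₀ ω) ^ 2) ∂P).toReal := by
    rw [integral_eq_lintegral_of_nonneg_ae (Eventually.of_forall fun ω => sq_nonneg _)
      hmsq.aestronglyMeasurable]
  have hle : (∫⁻ ω in {ω | ε ≤ |shrink r (X₀ ω)|},
      ENNReal.ofReal (shrink r (X₀ ω) ^ 2) ∂P)
      ≤ ∫⁻ ω, ENNReal.ofReal (4 * shrink (r + ε / 2) (X₀ ω) ^ 2) ∂P := by
    rw [← lintegral_indicator hA]
    apply lintegral_mono
    intro ω
    by_cases hω : ω ∈ {ω | ε ≤ |shrink r (X₀ ω)|}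
    · rw [Set.indicator_of_mem hω]
      exact ENNReal.ofReal_le_ofReal (shrink_sq_le r ε (X₀ ω) hr hε hω)
    · rw [Set.indicator_of_notMem hω]
      exact zero_le
  have h4 : (∫⁻ ω, ENNReal.ofReal (4 * shrink (r + ε / 2) (X₀ ω) ^ 2) ∂P)
      = 8 * Gfun P X₀ (r + ε / 2) := by
    simp_rw [ENNReal.ofReal_mul (by norm_num : (0:ℝ) ≤ 4)]
    rw [lintegral_const_mul _ (by
      exact ENNReal.measurable_ofReal.comp
        (((measurable_shrink _).comp hmeas).pow measurable_const)),
      lintegral_shrink_sq P X₀ hmeas _ hs, ENNReal.ofReal_ofNat]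
    ring
  rw [heq]
  have h8top : (8 : ℝ≥0∞) * Gfun P X₀ (r + ε / 2) ≠ ∞ :=
    ENNReal.mul_ne_top (by simp) hGtop
  calc (∫⁻ ω in {ω | ε ≤ |shrink r (X₀ ω)|},
      ENNReal.ofReal (shrink r (X₀ ω) ^ 2) ∂P).toReal
      ≤ ((8 : ℝ≥0∞) * Gfun P X₀ (r + ε / 2)).toReal :=
        ENNReal.toReal_mono h8top (hle.trans_eq h4)
    _ = 8 * (Gfun P X₀ (r + ε / 2)).toReal := by
        rw [ENNReal.toReal_mul]; norm_num
end
end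

section
/- Suppose X = (X_k, k ∈ ℤ) is a strictly stationary sequence of centered, square-integrable real-valued random variables such that ρ*(X,1) < 1. Then for every positive integer n, ([1−ρ*(X,1)]/[1+ρ*(X,1)])·n·E[X_0²] ≤ E[(∑_{k=1}^n X_k)²] ≤ ([1+ρ*(X,1)]/[1−ρ*(X,1)])·n·E[X_0²]. -/
open MeasureTheory ProbabilityTheory Filter Asymptotics
open scoped ENNReal Topology NNReal

noncomputable section

variable {Ω : Type*}

section Helpers

variable [mΩ : MeasurableSpace Ω]

lemma integrable_mul_of_memL2 (P : Measure Ω) [IsProbabilityMeasure P]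
    (f g : Ω → ℝ) (hf : MemLp f 2 P) (hg : MemLp g 2 P) :
    Integrable (fun ω => f ω * g ω) P := by
  have h : Integrable (fun ω => (((f ω + g ω) ^ 2 - f ω ^ 2) - g ω ^ 2) / 2) P :=
    (((hf.add hg).integrable_sq.sub hf.integrable_sq).sub hg.integrable_sq).div_const 2
  have heq : (fun ω => f ω * g ω)
      = fun ω => (((f ω + g ω) ^ 2 - f ω ^ 2) - g ω ^ 2) / 2 := by
    funext ω; ring
  rw [heq]; exact h

lemma integral_mul_sq_le (P : Measure Ω) [IsProbabilityMeasure P]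
    (f g : Ω → ℝ) (hf : MemLp f 2 P) (hg : MemLp g 2 P) :
    (∫ ω, f ω * g ω ∂P) ^ 2 ≤ (∫ ω, f ω ^ 2 ∂P) * (∫ ω, g ω ^ 2 ∂P) := by
  set A := ∫ ω, f ω ^ 2 ∂P with hA
  set B := ∫ ω, f ω * g ω ∂P with hB
  set C := ∫ ω, g ω ^ 2 ∂P with hC
  have key : ∀ t : ℝ, 0 ≤ C * (t * t) + (2 * B) * t + A := by
    intro t
    have e : ∀ ω, (f ω + t * g ω) ^ 2
        = (t * t) * (g ω ^ 2) + ((2 * t) * (f ω * g ω) + f ω ^ 2) := by intro ω; ring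
    have hint1 : Integrable (fun ω => (t * t) * (g ω ^ 2)) P := hg.integrable_sq.const_mul _
    have hint2 : Integrable (fun ω => (2 * t) * (f ω * g ω)) P :=
      (integrable_mul_of_memL2 P f g hf hg).const_mul _
    have h2 : 0 ≤ ∫ ω, (f ω + t * g ω) ^ 2 ∂P := integral_nonneg fun ω => sq_nonneg _
    have h3 : ∫ ω, (f ω + t * g ω) ^ 2 ∂P = C * (t * t) + (2 * B) * t + A := by
      simp_rw [e]
      have hint3 : Integrable (fun ω => (2 * t) * (f ω * g ω) + f ω ^ 2) P :=
        hint2.add hf.integrable_sq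
      rw [integral_add hint1 hint3, integral_add hint2 hf.integrable_sq,
        integral_const_mul, integral_const_mul]
      ring
    linarith [h3 ▸ h2]
  have hd := discrim_le_zero key
  rw [discrim] at hd
  nlinarith [hd]

lemma abs_integral_mul_le (P : Measure Ω) [IsProbabilityMeasure P]
    (f g : Ω → ℝ) (hf : MemLp f 2 P) (hg : MemLp g 2 P) :
    |∫ ω, f ω * g ω ∂P| ≤
      Real.sqrt (∫ ω, f ω ^ 2 ∂P) * Real.sqrt (∫ ω, g ω ^ 2 ∂P) := by
  have h := integral_mul_sq_le P f g hf hg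
  have hA : 0 ≤ ∫ ω, f ω ^ 2 ∂P := integral_nonneg fun ω => sq_nonneg _
  calc |∫ ω, f ω * g ω ∂P| = Real.sqrt ((∫ ω, f ω * g ω ∂P) ^ 2) :=
        (Real.sqrt_sq_eq_abs _).symm
    _ ≤ Real.sqrt ((∫ ω, f ω ^ 2 ∂P) * (∫ ω, g ω ^ 2 ∂P)) := Real.sqrt_le_sqrt h
    _ = Real.sqrt (∫ ω, f ω ^ 2 ∂P) * Real.sqrt (∫ ω, g ω ^ 2 ∂P) := Real.sqrt_mul hA _

lemma abs_corr_le_one (P : Measure Ω) [IsProbabilityMeasure P]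
    (f g : Ω → ℝ) (hf : MemLp f 2 P) (hg : MemLp g 2 P) :
    |corr P f g| ≤ 1 := by
  have hF : MemLp (fun ω => f ω - ∫ x, f x ∂P) 2 P := hf.sub (memLp_const _)
  have hG : MemLp (fun ω => g ω - ∫ x, g x ∂P) 2 P := hg.sub (memLp_const _)
  have h := abs_integral_mul_le P _ _ hF hG
  rw [corr]
  rcases eq_or_ne (Real.sqrt (∫ ω, (f ω - ∫ x, f x ∂P) ^ 2 ∂P) *
      Real.sqrt (∫ ω, (g ω - ∫ x, g x ∂P) ^ 2 ∂P)) 0 with h0 | h0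
  · rw [h0, div_zero]; simp
  · have hpos : 0 < Real.sqrt (∫ ω, (f ω - ∫ x, f x ∂P) ^ 2 ∂P) *
        Real.sqrt (∫ ω, (g ω - ∫ x, g x ∂P) ^ 2 ∂P) :=
      lt_of_le_of_ne (mul_nonneg (Real.sqrt_nonneg _) (Real.sqrt_nonneg _)) (Ne.symm h0)
    rw [abs_div, abs_of_pos hpos, div_le_one hpos]
    exact h

lemma corr_le_maxCorr (P : Measure Ω) [IsProbabilityMeasure P]
    (A B : MeasurableSpace Ω) (f g : Ω → ℝ)
    (hfA : Measurable[A] f) (hgB : Measurable[B] g)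
    (hf : @MemLp Ω ℝ mΩ _ _ f 2 P) (hg : @MemLp Ω ℝ mΩ _ _ g 2 P) :
    |@corr Ω mΩ P f g| ≤ @maxCorr Ω mΩ P A B := by
  apply le_csSup
  · refine ⟨1, ?_⟩
    rintro c ⟨f', g', _, _, hf', hg', rfl⟩
    exact @abs_corr_le_one Ω mΩ P _ f' g' hf' hg'
  · exact ⟨f, g, hfA, hgB, hf, hg, rfl⟩

lemma maxCorr_nonneg (P : Measure Ω) [IsProbabilityMeasure P]
    (A B : MeasurableSpace Ω) : 0 ≤ @maxCorr Ω mΩ P A B := by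
  refine le_trans (abs_nonneg (@corr Ω mΩ P (fun _ => (0:ℝ)) (fun _ => (0:ℝ)))) ?_
  exact @corr_le_maxCorr Ω mΩ P _ A B _ _ measurable_const measurable_const
    (memLp_const (0:ℝ) : @MemLp Ω ℝ mΩ _ _ (fun _ => (0:ℝ)) 2 P)
    (memLp_const (0:ℝ) : @MemLp Ω ℝ mΩ _ _ (fun _ => (0:ℝ)) 2 P)

lemma maxCorr_le_one (P : Measure Ω) [IsProbabilityMeasure P]
    (A B : MeasurableSpace Ω) : @maxCorr Ω mΩ P A B ≤ 1 := by
  apply csSup_le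
  · exact ⟨_, (fun _ => (0:ℝ)), (fun _ => (0:ℝ)), measurable_const, measurable_const,
      memLp_const 0, memLp_const 0, rfl⟩
  · rintro c ⟨f', g', _, _, hf', hg', rfl⟩
    exact @abs_corr_le_one Ω mΩ P _ f' g' hf' hg'

lemma maxCorr_le_rhoStar (P : Measure Ω) [IsProbabilityMeasure P]
    (X : ℤ → Ω → ℝ) (S T : Set ℤ) (hS : S.Nonempty) (hT : T.Nonempty)
    (hd : Disjoint S T) (hdist : ∀ s ∈ S, ∀ t ∈ T, (1 : ℤ) ≤ |s - t|) :
    maxCorr P (genFrom X S) (genFrom X T) ≤ rhoStarCoef P X 1 := by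
  apply le_csSup
  · refine ⟨1, ?_⟩
    rintro c ⟨S', T', _, _, _, _, rfl⟩
    exact maxCorr_le_one P _ _
  · exact ⟨S, T, hS, hT, hd, by simpa using hdist, rfl⟩

lemma rhoStar_nonneg (P : Measure Ω) [IsProbabilityMeasure P]
    (X : ℤ → Ω → ℝ) : 0 ≤ rhoStarCoef P X 1 := by
  refine le_trans (maxCorr_nonneg P (genFrom X ({0} : Set ℤ)) (genFrom X ({1} : Set ℤ))) ?_
  refine maxCorr_le_rhoStar P X ({0} : Set ℤ) ({1} : Set ℤ) ⟨0, rfl⟩ ⟨1, rfl⟩ (by simp) ?_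
  rintro s rfl t rfl
  simp

lemma measurable_genFrom_sum (X : ℤ → Ω → ℝ) (A : Finset ℤ) :
    Measurable[genFrom X ↑A] (fun ω => ∑ k ∈ A, X k ω) := by
  refine Finset.measurable_sum _ (fun k hk => ?_)
  refine measurable_iff_comap_le.mpr ?_
  rw [genFrom]
  exact le_biSup (fun k => MeasurableSpace.comap (X k) inferInstance)
    (show (k : ℤ) ∈ (↑A : Set ℤ) by exact_mod_cast hk)

lemma cov_bound (P : Measure Ω) [IsProbabilityMeasure P]
    (X : ℤ → Ω → ℝ) (hL2 : ∀ k, MemLp (X k) 2 P) (hcent : ∀ k, ∫ ω, X k ω ∂P = 0)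
    (A B : Finset ℤ) (hA : A.Nonempty) (hB : B.Nonempty) (hd : Disjoint A B) :
    |∫ ω, (∑ k ∈ A, X k ω) * (∑ k ∈ B, X k ω) ∂P| ≤
      rhoStarCoef P X 1 * (Real.sqrt (∫ ω, (∑ k ∈ A, X k ω) ^ 2 ∂P) *
        Real.sqrt (∫ ω, (∑ k ∈ B, X k ω) ^ 2 ∂P)) := by
  set u : Ω → ℝ := fun ω => ∑ k ∈ A, X k ω with hu
  set v : Ω → ℝ := fun ω => ∑ k ∈ B, X k ω with hv
  have hu2 : MemLp u 2 P := memLp_finset_sum A (fun k _ => hL2 k)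
  have hv2 : MemLp v 2 P := memLp_finset_sum B (fun k _ => hL2 k)
  have habs : |∫ ω, u ω * v ω ∂P| ≤
      Real.sqrt (∫ ω, u ω ^ 2 ∂P) * Real.sqrt (∫ ω, v ω ^ 2 ∂P) :=
    abs_integral_mul_le P u v hu2 hv2
  rcases eq_or_ne (Real.sqrt (∫ ω, u ω ^ 2 ∂P) * Real.sqrt (∫ ω, v ω ^ 2 ∂P)) 0 with h0 | h0
  · rw [h0, mul_zero]
    exact le_trans habs (le_of_eq h0)
  · have hpos : 0 < Real.sqrt (∫ ω, u ω ^ 2 ∂P) * Real.sqrt (∫ ω, v ω ^ 2 ∂P) :=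
      lt_of_le_of_ne (mul_nonneg (Real.sqrt_nonneg _) (Real.sqrt_nonneg _)) (Ne.symm h0)
    have hmu : ∫ ω, u ω ∂P = 0 := by
      rw [hu, integral_finset_sum _ (fun k _ => (hL2 k).integrable one_le_two)]
      simp [hcent]
    have hmv : ∫ ω, v ω ∂P = 0 := by
      rw [hv, integral_finset_sum _ (fun k _ => (hL2 k).integrable one_le_two)]
      simp [hcent]
    have hcorr : corr P u v = (∫ ω, u ω * v ω ∂P) /
        (Real.sqrt (∫ ω, u ω ^ 2 ∂P) * Real.sqrt (∫ ω, v ω ^ 2 ∂P)) := by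
      rw [corr, hmu, hmv]
      simp only [sub_zero]
    have h1 : |corr P u v| ≤ rhoStarCoef P X 1 := by
      refine le_trans (corr_le_maxCorr P (genFrom X ↑A) (genFrom X ↑B) u v
        (measurable_genFrom_sum X A) (measurable_genFrom_sum X B) hu2 hv2) ?_
      refine maxCorr_le_rhoStar P X ↑A ↑B (by exact_mod_cast hA) (by exact_mod_cast hB)
        (by exact_mod_cast hd) ?_
      intro s hs t ht
      refine Int.one_le_abs (sub_ne_zero.mpr ?_)
      intro hst
      exact (Finset.disjoint_left.mp hd (by exact_mod_cast hs)) (by rw [hst]; exact_mod_cast ht)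
    rw [hcorr, abs_div, abs_of_pos hpos, div_le_iff₀ hpos] at h1
    calc |∫ ω, u ω * v ω ∂P| ≤ rhoStarCoef P X 1 *
          (Real.sqrt (∫ ω, u ω ^ 2 ∂P) * Real.sqrt (∫ ω, v ω ^ 2 ∂P)) := h1
      _ = _ := rfl

end Helpers

/-- **Lemma 6.2.** Two-sided variance bounds for strictly stationary sequences with
`ρ*(1) < 1`. -/
theorem rhoStar_variance_bounds
    [MeasurableSpace Ω] (P : Measure Ω) [IsProbabilityMeasure P]
    (X : ℤ → Ω → ℝ) (hmeas : ∀ k, Measurable (X k)) (hstat : StrictlyStationary P X)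
    (hL2 : ∀ k, MemLp (X k) 2 P) (hcent : ∀ k, ∫ ω, X k ω ∂P = 0)
    (hrho : rhoStarCoef P X 1 < 1) :
    ∀ n : ℕ, 0 < n →
      ((1 - rhoStarCoef P X 1) / (1 + rhoStarCoef P X 1)) * n * ∫ ω, X 0 ω ^ 2 ∂P ≤
          ∫ ω, (∑ k ∈ Finset.Icc (1 : ℤ) (n : ℤ), X k ω) ^ 2 ∂P ∧
        ∫ ω, (∑ k ∈ Finset.Icc (1 : ℤ) (n : ℤ), X k ω) ^ 2 ∂P ≤
          ((1 + rhoStarCoef P X 1) / (1 - rhoStarCoef P X 1)) * n * ∫ ω, X 0 ω ^ 2 ∂P := by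
  intro n hn
  have hρ0 : 0 ≤ rhoStarCoef P X 1 := rhoStar_nonneg P X
  set ρ := rhoStarCoef P X 1 with hρdef
  set I : Finset ℤ := Finset.Icc (1 : ℤ) (n : ℤ) with hIdef
  have hIcard : I.card = n := by
    rw [hIdef, Int.card_Icc]
    simp
  set σ2 := ∫ ω, X 0 ω ^ 2 ∂P with hσ2
  have hσ2nn : 0 ≤ σ2 := integral_nonneg fun ω => sq_nonneg _
  have hXsq : ∀ k : ℤ, ∫ ω, X k ω * X k ω ∂P = σ2 := by
    intro k
    have hmk : Measurable fun ω => fun i : Fin (0 + 1) => X (k + (i : ℤ)) ω :=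
      measurable_pi_lambda _ fun i => hmeas _
    have hm0 : Measurable fun ω => fun i : Fin (0 + 1) => X (0 + (i : ℤ)) ω :=
      measurable_pi_lambda _ fun i => hmeas _
    have hfm : Measurable fun v : Fin (0 + 1) → ℝ => v 0 * v 0 :=
      (measurable_pi_apply 0).mul (measurable_pi_apply 0)
    have h := hstat k 0 0
    have e1 : ∫ ω, X k ω * X k ω ∂P
        = ∫ v, v 0 * v 0 ∂(Measure.map (fun ω => fun i : Fin (0 + 1) => X (k + (i : ℤ)) ω) P) := by
      rw [integral_map hmk.aemeasurable hfm.aestronglyMeasurable]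
      simp
    have e2 : ∫ ω, X 0 ω * X 0 ω ∂P
        = ∫ v, v 0 * v 0 ∂(Measure.map (fun ω => fun i : Fin (0 + 1) => X (0 + (i : ℤ)) ω) P) := by
      rw [integral_map hm0.aemeasurable hfm.aestronglyMeasurable]
      simp
    have e3 : σ2 = ∫ ω, X 0 ω * X 0 ω ∂P := by
      rw [hσ2]; simp_rw [sq]
    rw [e3, e1, e2, h]
  have hmul : ∀ j k : ℤ, Integrable (fun ω => X j ω * X k ω) P :=
    fun j k => integrable_mul_of_memL2 P _ _ (hL2 j) (hL2 k)
  set c : ℤ → ℤ → ℝ := fun j k => ∫ ω, X j ω * X k ω ∂P with hcdef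
  have hcjj : ∀ j : ℤ, c j j = σ2 := fun j => hXsq j
  have hexp : ∀ a : ℤ → ℝ,
      ∫ ω, (∑ k ∈ I, a k * X k ω) ^ 2 ∂P
        = ∑ j ∈ I, ∑ k ∈ I, (a j * a k) * c j k := by
    intro a
    have e : ∀ ω, (∑ k ∈ I, a k * X k ω) ^ 2
        = ∑ j ∈ I, ∑ k ∈ I, (a j * a k) * (X j ω * X k ω) := by
      intro ω
      rw [sq, Finset.sum_mul_sum]
      exact Finset.sum_congr rfl fun j _ => Finset.sum_congr rfl fun k _ => by ring
    simp_rw [e]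
    rw [integral_finset_sum _
      (fun j _ => integrable_finset_sum _ (fun k _ => (hmul j k).const_mul _))]
    refine Finset.sum_congr rfl fun j _ => ?_
    rw [integral_finset_sum _ (fun k _ => (hmul j k).const_mul _)]
    exact Finset.sum_congr rfl fun k _ => integral_const_mul _ _
  set V := ∫ ω, (∑ k ∈ I, X k ω) ^ 2 ∂P with hVdef
  have hVnn : 0 ≤ V := integral_nonneg fun ω => sq_nonneg _
  set sgn : Finset ℤ → ℤ → ℝ := fun J k => if k ∈ J then 1 else -1 with hsgn
  set d : Finset ℤ → ℝ := fun J => ∫ ω, (∑ k ∈ I, sgn J k * X k ω) ^ 2 ∂P with hddef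
  have hdnn : ∀ J, 0 ≤ d J := fun J => integral_nonneg fun ω => sq_nonneg _
  -- orthogonality of signs
  have horth : ∀ j ∈ I, ∀ k ∈ I,
      ∑ J ∈ I.powerset, sgn J j * sgn J k = if j = k then (2 : ℝ) ^ n else 0 := by
    intro j hj k hk
    rcases eq_or_ne j k with rfl | hjk
    · rw [if_pos rfl]
      have e : ∀ J ∈ I.powerset, sgn J j * sgn J j = 1 := by
        intro J _
        rcases em (j ∈ J) with h | h <;> simp [hsgn, h]
      rw [Finset.sum_congr rfl e, Finset.sum_const, Finset.card_powerset, hIcard]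
      simp
    · rw [if_neg hjk]
      refine Finset.sum_involution
        (fun J _ => if j ∈ J then J.erase j else insert j J) ?_ ?_ ?_ ?_
      · intro J _
        rcases em (j ∈ J) with h | h
        · rcases em (k ∈ J) with h' | h' <;>
            simp [hsgn, h, h', Finset.mem_erase, Ne.symm hjk, hjk]
        · rcases em (k ∈ J) with h' | h' <;>
            simp [hsgn, h, h', Finset.mem_insert, Ne.symm hjk, hjk]
      · intro J _ _
        rcases em (j ∈ J) with h | h
        · rw [if_pos h]
          intro hEq
          have := Finset.notMem_erase j J
          rw [hEq] at this
          exact this h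
        · rw [if_neg h]
          intro hEq
          have := Finset.mem_insert_self j J
          rw [hEq] at this
          exact h this
      · intro J hJ
        rcases em (j ∈ J) with h | h
        · rw [if_pos h]
          exact Finset.mem_powerset.mpr
            ((Finset.erase_subset _ _).trans (Finset.mem_powerset.mp hJ))
        · rw [if_neg h]
          exact Finset.mem_powerset.mpr
            (Finset.insert_subset hj (Finset.mem_powerset.mp hJ))
      · intro J _
        rcases em (j ∈ J) with h | h
        · rw [if_pos h]
          rw [if_neg (Finset.notMem_erase j J)]
          exact Finset.insert_erase h
        · rw [if_neg h]
          rw [if_pos (Finset.mem_insert_self j J)]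
          exact Finset.erase_insert h
  have hdsum : ∑ J ∈ I.powerset, d J = 2 ^ n * ((n : ℝ) * σ2) := by
    have e1 : ∀ J ∈ I.powerset, d J = ∑ j ∈ I, ∑ k ∈ I, (sgn J j * sgn J k) * c j k :=
      fun J _ => hexp (sgn J)
    calc ∑ J ∈ I.powerset, d J
        = ∑ J ∈ I.powerset, ∑ j ∈ I, ∑ k ∈ I, (sgn J j * sgn J k) * c j k :=
          Finset.sum_congr rfl e1
      _ = ∑ j ∈ I, ∑ J ∈ I.powerset, ∑ k ∈ I, (sgn J j * sgn J k) * c j k :=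
          Finset.sum_comm
      _ = ∑ j ∈ I, ∑ k ∈ I, ∑ J ∈ I.powerset, (sgn J j * sgn J k) * c j k :=
          Finset.sum_congr rfl fun j _ => Finset.sum_comm
      _ = ∑ j ∈ I, ∑ k ∈ I, (∑ J ∈ I.powerset, sgn J j * sgn J k) * c j k := by
          simp_rw [Finset.sum_mul]
      _ = ∑ j ∈ I, ∑ k ∈ I, (if j = k then (2 : ℝ) ^ n else 0) * c j k := by
          refine Finset.sum_congr rfl fun j hj => Finset.sum_congr rfl fun k hk => ?_
          rw [horth j hj k hk]
      _ = ∑ j ∈ I, (2 : ℝ) ^ n * c j j := by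
          refine Finset.sum_congr rfl fun j hj => ?_
          rw [Finset.sum_eq_single_of_mem j hj
            (fun k _ hkj => by rw [if_neg (Ne.symm hkj), zero_mul]), if_pos rfl]
      _ = 2 ^ n * ((n : ℝ) * σ2) := by
          rw [← Finset.mul_sum]
          congr 1
          rw [Finset.sum_congr rfl (fun j _ => hcjj j), Finset.sum_const, hIcard,
            nsmul_eq_mul]
  -- key inequality for each subset
  have hVd : ∀ J ∈ I.powerset, |V - d J| ≤ ρ * (V + d J) := by
    intro J hJ
    have hJI : J ⊆ I := Finset.mem_powerset.mp hJ
    rcases J.eq_empty_or_nonempty with rfl | hJne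
    · have hd0 : d (∅ : Finset ℤ) = V := by
        have e : ∀ ω, (∑ k ∈ I, sgn (∅ : Finset ℤ) k * X k ω) ^ 2
            = (∑ k ∈ I, X k ω) ^ 2 := by
          intro ω
          have h1 : ∑ k ∈ I, sgn (∅ : Finset ℤ) k * X k ω = (-1) * ∑ k ∈ I, X k ω := by
            rw [Finset.mul_sum]
            exact Finset.sum_congr rfl fun k _ => by simp [hsgn]
          rw [h1]; ring
        show ∫ ω, (∑ k ∈ I, sgn (∅ : Finset ℤ) k * X k ω) ^ 2 ∂P
            = ∫ ω, (∑ k ∈ I, X k ω) ^ 2 ∂P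
        exact integral_congr_ae (Filter.EventuallyEq.of_eq (funext e))
      rw [hd0]
      rw [sub_self, abs_zero]
      have : 0 ≤ V + V := by linarith
      exact mul_nonneg hρ0 this
    rcases (I \ J).eq_empty_or_nonempty with hIJ | hIJne
    · have hJI' : J = I :=
        Finset.Subset.antisymm hJI (Finset.sdiff_eq_empty_iff_subset.mp hIJ)
      have hd0 : d J = V := by
        have e : ∀ ω, (∑ k ∈ I, sgn J k * X k ω) ^ 2 = (∑ k ∈ I, X k ω) ^ 2 := by
          intro ω
          congr 1
          refine Finset.sum_congr rfl fun k hk => ?_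
          have hkJ : k ∈ J := hJI' ▸ hk
          simp [hsgn, hkJ]
        show ∫ ω, (∑ k ∈ I, sgn J k * X k ω) ^ 2 ∂P = ∫ ω, (∑ k ∈ I, X k ω) ^ 2 ∂P
        exact integral_congr_ae (Filter.EventuallyEq.of_eq (funext e))
      rw [hd0, sub_self, abs_zero]
      have : 0 ≤ V + V := by linarith
      exact mul_nonneg hρ0 this
    · -- main case : both J and I \ J nonempty
      set u : Ω → ℝ := fun ω => ∑ k ∈ J, X k ω with hu
      set v : Ω → ℝ := fun ω => ∑ k ∈ I \ J, X k ω with hv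
      have hu2 : MemLp u 2 P := memLp_finset_sum J (fun k _ => hL2 k)
      have hv2 : MemLp v 2 P := memLp_finset_sum _ (fun k _ => hL2 k)
      have huvi : Integrable (fun ω => u ω * v ω) P := integrable_mul_of_memL2 P u v hu2 hv2
      have hu2i := hu2.integrable_sq
      have hv2i := hv2.integrable_sq
      have hann : 0 ≤ ∫ ω, u ω ^ 2 ∂P := integral_nonneg fun ω => sq_nonneg _
      have hbnn : 0 ≤ ∫ ω, v ω ^ 2 ∂P := integral_nonneg fun ω => sq_nonneg _
      set a := ∫ ω, u ω ^ 2 ∂P with ha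
      set b := ∫ ω, v ω ^ 2 ∂P with hb
      set cv := ∫ ω, u ω * v ω ∂P with hcv
      have hsplit : ∀ ω, ∑ k ∈ I, X k ω = u ω + v ω := by
        intro ω
        rw [hu, hv]
        dsimp only
        rw [add_comm, Finset.sum_sdiff hJI]
      have hsign : ∀ ω, ∑ k ∈ I, sgn J k * X k ω = u ω - v ω := by
        intro ω
        rw [← Finset.sum_sdiff hJI (f := fun k => sgn J k * X k ω)]
        have e1 : ∑ k ∈ I \ J, sgn J k * X k ω = (-1) * ∑ k ∈ I \ J, X k ω := by
          rw [Finset.mul_sum]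
          refine Finset.sum_congr rfl fun k hk => ?_
          have : k ∉ J := (Finset.mem_sdiff.mp hk).2
          simp [hsgn, this]
        have e2 : ∑ k ∈ J, sgn J k * X k ω = ∑ k ∈ J, X k ω := by
          refine Finset.sum_congr rfl fun k hk => ?_
          simp [hsgn, hk]
        rw [e1, e2, hu, hv]
        dsimp only
        ring
      have hVexp : V = a + 2 * cv + b := by
        have e : (fun ω => (∑ k ∈ I, X k ω) ^ 2)
            = fun ω => u ω ^ 2 + (2 * (u ω * v ω) + v ω ^ 2) := by
          funext ω; rw [hsplit ω]; ring
        have hint : Integrable (fun ω => 2 * (u ω * v ω) + v ω ^ 2) P :=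
          (huvi.const_mul 2).add hv2i
        rw [hVdef, e, integral_add hu2i hint, integral_add (huvi.const_mul 2) hv2i,
          integral_const_mul, ← ha, ← hb, ← hcv]
        ring
      have hdexp : d J = a - 2 * cv + b := by
        have e : (fun ω => (∑ k ∈ I, sgn J k * X k ω) ^ 2)
            = fun ω => u ω ^ 2 + ((-2) * (u ω * v ω) + v ω ^ 2) := by
          funext ω; rw [hsign ω]; ring
        have hint : Integrable (fun ω => (-2) * (u ω * v ω) + v ω ^ 2) P :=
          (huvi.const_mul (-2)).add hv2i
        have hdJ : d J = ∫ ω, (∑ k ∈ I, sgn J k * X k ω) ^ 2 ∂P := rfl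
        rw [hdJ, e, integral_add hu2i hint, integral_add (huvi.const_mul (-2)) hv2i,
          integral_const_mul, ← ha, ← hb, ← hcv]
        ring
      have hcov : |cv| ≤ ρ * (Real.sqrt a * Real.sqrt b) :=
        cov_bound P X hL2 hcent J (I \ J) hJne hIJne Finset.disjoint_sdiff
      have hamgm : 2 * (Real.sqrt a * Real.sqrt b) ≤ a + b := by
        nlinarith [Real.sq_sqrt hann, Real.sq_sqrt hbnn,
          sq_nonneg (Real.sqrt a - Real.sqrt b)]
      have hsab : 0 ≤ Real.sqrt a * Real.sqrt b :=
        mul_nonneg (Real.sqrt_nonneg _) (Real.sqrt_nonneg _)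
      rw [hVexp, hdexp]
      rw [show a + 2 * cv + b - (a - 2 * cv + b) = 4 * cv by ring]
      rw [abs_mul, show |(4 : ℝ)| = 4 by norm_num]
      calc (4 : ℝ) * |cv| ≤ 4 * (ρ * (Real.sqrt a * Real.sqrt b)) := by
            exact mul_le_mul_of_nonneg_left hcov (by norm_num)
        _ ≤ ρ * (2 * (a + b)) := by nlinarith [hρ0, hamgm]
        _ = ρ * (a + 2 * cv + b + (a - 2 * cv + b)) := by ring
  -- averaging over all subsets
  have hmain : |V - (n : ℝ) * σ2| ≤ ρ * (V + (n : ℝ) * σ2) := by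
    have h1 : |∑ J ∈ I.powerset, (V - d J)| ≤ ∑ J ∈ I.powerset, (ρ * (V + d J)) :=
      (Finset.abs_sum_le_sum_abs _ _).trans (Finset.sum_le_sum hVd)
    have hcardpow : (I.powerset).card = 2 ^ n := by rw [Finset.card_powerset, hIcard]
    have e1 : ∑ J ∈ I.powerset, (V - d J) = 2 ^ n * (V - (n : ℝ) * σ2) := by
      rw [Finset.sum_sub_distrib, hdsum, Finset.sum_const, hcardpow, nsmul_eq_mul]
      push_cast
      ring
    have e2 : ∑ J ∈ I.powerset, (ρ * (V + d J)) = 2 ^ n * (ρ * (V + (n : ℝ) * σ2)) := by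
      rw [← Finset.mul_sum, Finset.sum_add_distrib, hdsum, Finset.sum_const, hcardpow,
        nsmul_eq_mul]
      push_cast
      ring
    rw [e1, e2, abs_mul, abs_of_pos (show (0:ℝ) < 2 ^ n by positivity)] at h1
    exact le_of_mul_le_mul_left h1 (by positivity)
  constructor
  · have h := (abs_le.mp hmain).1
    rw [div_mul_eq_mul_div, div_mul_eq_mul_div, div_le_iff₀ (by linarith : (0:ℝ) < 1 + ρ)]
    nlinarith [h]
  · have h := (abs_le.mp hmain).2
    rw [div_mul_eq_mul_div, div_mul_eq_mul_div, le_div_iff₀ (by linarith : (0:ℝ) < 1 - ρ)]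
    nlinarith [h]
end
end
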